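/- Let L ⊆ ∏_{i=1}^t L_i be a subdirect product of finite lattices. Then every element of L is a (possibly empty) join of elements from ⋃_{i=1}^t σ_i(J(L_i)), where σ_i is the smallest-preimage map of the i-th projection. -/
import Mathlib


/-- In a subdirect product `L ⊆ ∏ᵢ Lᵢ` of finite lattices, every element
of `L` is a (possibly empty) join of elements of `⋃ᵢ σᵢ(J(Lᵢ))` (the empty join
being the bottom element of `L`, expressed via `IsLUB`). -/
theorem stmt_4 {t : ℕ} {Lf : Fin t → Type*} [∀ i, Lattice (Lf i)] [∀ i, Finite (Lf i)]
    (L : Sublattice (∀ i, Lf i))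
    (hsurj : ∀ i, Function.Surjective fun x : L => x.val i)
    (σ : ∀ j, Lf j → L)
    (hσ : ∀ j (y : Lf j), IsLeast {x : L | x.val j = y} (σ j y)) :
    ∀ x : L, ∃ A : Set L,
      (∀ a ∈ A, ∃ i, ∃ q : Lf i, SupIrred q ∧ σ i q = a) ∧ IsLUB A x := by
  intro x
  -- σ is monotone
  have hmono : ∀ j (y y' : Lf j), y ≤ y' → σ j y ≤ σ j y' := by
    intro j y y' h
    have hmem : (↑(σ j y ⊓ σ j y') : ∀ i, Lf i) j = y := by
      have h1 : (σ j y).val j = y := (hσ j y).1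
      have h2 : (σ j y').val j = y' := (hσ j y').1
      show (σ j y).val j ⊓ (σ j y').val j = y
      rw [h1, h2, inf_eq_left]; exact h
    exact le_trans ((hσ j y).2 hmem) inf_le_right
  refine ⟨{a : L | (∃ i, ∃ q : Lf i, SupIrred q ∧ σ i q = a) ∧ a ≤ x},
    fun a ha => ha.1, ⟨fun a ha => ha.2, ?_⟩⟩
  intro u hu
  -- componentwise
  have : ∀ j, x.val j ≤ u.val j := by
    intro j
    have : Nonempty (Lf j) := ⟨x.val j⟩
    have : Fintype (Lf j) := Fintype.ofFinite _
    letI : OrderBot (Lf j) := Fintype.toOrderBot (Lf j)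
    obtain ⟨s, hs, hirr⟩ := exists_supIrred_decomposition (x.val j)
    rw [← hs]
    refine Finset.sup_le fun q hq => ?_
    have hqx : q ≤ x.val j := hs ▸ Finset.le_sup (f := id) hq
    have hσqx : σ j q ≤ x := by
      refine le_trans (hmono j q (x.val j) hqx) ?_
      exact (hσ j (x.val j)).2 rfl
    have hmemA : σ j q ∈ {a : L | (∃ i, ∃ q : Lf i, SupIrred q ∧ σ i q = a) ∧ a ≤ x} :=
      ⟨⟨j, q, hirr hq, rfl⟩, hσqx⟩
    have := hu hmemA
    calc q = (σ j q).val j := ((hσ j q).1).symm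
      _ ≤ u.val j := this j
  exact this
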